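/- Let 𝓜 be a model such that (1) for every (F,Q) ∈ 𝓜 the number of columns K(F) of F satisfies K(F) < N, and (2) for every (F,Q) ∈ 𝓜 and every Q' ∈ 𝓠_{K(F)}^an, the pair (F,Q') belongs to 𝓜. Then 𝓜 is identifiable if and only if both of the following hold: (a) for all (F¹,Q¹),(F²,Q²) ∈ 𝓜 with F¹Q¹ = F²Q², co(F¹) = co(F²); and (b) for every (F,Q) ∈ 𝓜 with K = K(F), the vectors F_{⋆1}−F_{⋆K}, …, F_{⋆(K−1)}−F_{⋆K} are linearly independent. -/

import Mathlib

open Matrix BigOperators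

/-- `F ∈ 𝓕_K`: real `M × K` matrix with entries in `[0,1]`. -/
def memF {M K : ℕ} (F : Matrix (Fin M) (Fin K) ℝ) : Prop :=
  ∀ s k, 0 ≤ F s k ∧ F s k ≤ 1

/-- `Q ∈ 𝓠_K`: real `K × N` matrix with nonnegative entries whose columns sum to 1. -/
def memQ {K N : ℕ} (Q : Matrix (Fin K) (Fin N) ℝ) : Prop :=
  (∀ k i, 0 ≤ Q k i) ∧ ∀ i, ∑ k, Q k i = 1

/-- The standard basis vector `e_k` occurs as a column of `Q`. -/
def isColE {K N : ℕ} (Q : Matrix (Fin K) (Fin N) ℝ) (k : Fin K) : Prop :=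
  ∃ i, ∀ l, Q l i = if l = k then (1 : ℝ) else 0

/-- `Q ∈ 𝓠_K^an`: anchor condition on `Q`. -/
def memQan {K N : ℕ} (Q : Matrix (Fin K) (Fin N) ℝ) : Prop :=
  memQ Q ∧ ∀ k, isColE Q k

/-- The `K-1` column differences `F_{⋆1}−F_{⋆K}, …, F_{⋆(K−1)}−F_{⋆K}` are
linearly independent (stated for every proof of `0 < K`). -/
def colDiffIndep {M K : ℕ} (F : Matrix (Fin M) (Fin K) ℝ) : Prop :=
  ∀ hK : 0 < K, LinearIndependent ℝ (fun j : Fin (K - 1) =>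
    (fun s => F s (Fin.castLE (Nat.sub_le K 1) j) - F s ⟨K - 1, Nat.sub_lt hK Nat.one_pos⟩ :
      Fin M → ℝ))

/-- `F ∈ 𝓕_K^in`. -/
def memFin {M K : ℕ} (F : Matrix (Fin M) (Fin K) ℝ) : Prop :=
  memF F ∧ colDiffIndep F

/-- `F ∈ 𝓕_K^an`: anchor condition on `F`. -/
def memFan {M K : ℕ} (F : Matrix (Fin M) (Fin K) ℝ) : Prop :=
  memF F ∧ ∀ k, ∃ s, 0 < F s k ∧ ∀ l, l ≠ k → F s l = 0

/-- `Q ∈ 𝓠_K^in`: the rows of `Q` are linearly independent. -/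
def memQin {K N : ℕ} (Q : Matrix (Fin K) (Fin N) ℝ) : Prop :=
  memQ Q ∧ LinearIndependent ℝ (fun k : Fin K => Q k)

/-- `F ∈ 𝓕_K^d`: the columns of `F` are mutually distinct. -/
def memFd {M K : ℕ} (F : Matrix (Fin M) (Fin K) ℝ) : Prop :=
  memF F ∧ ∀ k l : Fin K, (∀ s, F s k = F s l) → k = l

/-- `Q ∈ 𝓠_K^ua`: every column of `Q` is a standard basis vector, and every
standard basis vector occurs as a column. -/
def memQua {K N : ℕ} (Q : Matrix (Fin K) (Fin N) ℝ) : Prop :=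
  memQ Q ∧ (∀ i, ∃ k, ∀ l, Q l i = if l = k then (1 : ℝ) else 0) ∧ ∀ k, isColE Q k

/-- `(F¹,Q¹) ∼ (F²,Q²)`: there is a bijection (permutation) `π` with
`F²_{⋆k} = F¹_{⋆π(k)}` and `Q²_{k⋆} = Q¹_{π(k)⋆}` for every `k`. -/
def MEquiv {M N K₁ K₂ : ℕ} (F1 : Matrix (Fin M) (Fin K₁) ℝ) (Q1 : Matrix (Fin K₁) (Fin N) ℝ)
    (F2 : Matrix (Fin M) (Fin K₂) ℝ) (Q2 : Matrix (Fin K₂) (Fin N) ℝ) : Prop :=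
  ∃ π : Fin K₂ → Fin K₁, Function.Bijective π ∧
    (∀ k s, F2 s k = F1 s (π k)) ∧ (∀ k i, Q2 k i = Q1 (π k) i)

/-- `co(F)`: convex hull of the columns of `F` in `ℝ^M`. -/
def coCols {M K : ℕ} (F : Matrix (Fin M) (Fin K) ℝ) : Set (Fin M → ℝ) :=
  convexHull ℝ {v | ∃ k, v = fun s => F s k}

/-- `cone(Q)`: all nonnegative linear combinations of the rows of `Q` in `ℝ^N`. -/
def coneRows {K N : ℕ} (Q : Matrix (Fin K) (Fin N) ℝ) : Set (Fin N → ℝ) :=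
  {x | ∃ c : Fin K → ℝ, (∀ k, 0 ≤ c k) ∧ x = ∑ k, c k • Q k}

/-- A model is identifiable if equality of the products implies equivalence. -/
def Identifiable {M N : ℕ}
    (𝓜 : ∀ K : ℕ, Set (Matrix (Fin M) (Fin K) ℝ × Matrix (Fin K) (Fin N) ℝ)) : Prop :=
  ∀ (K₁ K₂ : ℕ) (F1 : Matrix (Fin M) (Fin K₁) ℝ) (Q1 : Matrix (Fin K₁) (Fin N) ℝ)
    (F2 : Matrix (Fin M) (Fin K₂) ℝ) (Q2 : Matrix (Fin K₂) (Fin N) ℝ),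
    (F1, Q1) ∈ 𝓜 K₁ → (F2, Q2) ∈ 𝓜 K₂ → F1 * Q1 = F2 * Q2 → MEquiv F1 Q1 F2 Q2

/-- The set of indices `k` such that some row of `F` equals `δ_k · e_kᵀ` with `δ_k > 0`. -/
def anchorRows {M K : ℕ} (F : Matrix (Fin M) (Fin K) ℝ) : Set (Fin K) :=
  {k | ∃ (s : Fin M) (d : ℝ), 0 < d ∧ ∀ l, F s l = if l = k then d else 0}


lemma sum_split {K : ℕ} (hK : 0 < K) (f : Fin K → ℝ) :
    ∑ k, f k = (∑ j : Fin (K-1), f (Fin.castLE (Nat.sub_le K 1) j))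
      + f ⟨K-1, Nat.sub_lt hK Nat.one_pos⟩ := by
  have h : K - 1 + 1 = K := by omega
  rw [← (finCongr h).sum_comp f, Fin.sum_univ_castSucc]
  congr 1

lemma colDiffIndep_iff_zero {M K : ℕ} (F : Matrix (Fin M) (Fin K) ℝ) (hK : 0 < K) :
    colDiffIndep F ↔
      ∀ c : Fin K → ℝ, ∑ k, c k = 0 → (∀ s, ∑ k, c k * F s k = 0) → c = 0 := by
  have hcases : ∀ k : Fin K, (∃ j : Fin (K-1), k = Fin.castLE (Nat.sub_le K 1) j)
      ∨ k = ⟨K-1, Nat.sub_lt hK Nat.one_pos⟩ := by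
    intro k
    by_cases h : (k : ℕ) < K - 1
    · exact Or.inl ⟨⟨k, h⟩, Fin.ext rfl⟩
    · exact Or.inr (Fin.ext (show (k:ℕ) = K - 1 by omega))
  constructor
  · intro h c hsum hF
    have hind := h hK
    rw [Fintype.linearIndependent_iff] at hind
    have hz : ∑ j : Fin (K-1), (c (Fin.castLE (Nat.sub_le K 1) j)) •
        (fun s => F s (Fin.castLE (Nat.sub_le K 1) j)
          - F s ⟨K-1, Nat.sub_lt hK Nat.one_pos⟩ : Fin M → ℝ) = 0 := by
      funext s
      have h1 := sum_split hK (fun k => c k * F s k)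
      have h2 := sum_split hK c
      rw [hF s] at h1
      rw [hsum] at h2
      simp only [Finset.sum_apply, Pi.smul_apply, Pi.zero_apply, smul_eq_mul]
      have h3 : ∑ j : Fin (K-1), c (Fin.castLE (Nat.sub_le K 1) j)
            * (F s (Fin.castLE (Nat.sub_le K 1) j) - F s ⟨K-1, Nat.sub_lt hK Nat.one_pos⟩)
          = (∑ j : Fin (K-1), c (Fin.castLE (Nat.sub_le K 1) j)
              * F s (Fin.castLE (Nat.sub_le K 1) j))
            - (∑ j : Fin (K-1), c (Fin.castLE (Nat.sub_le K 1) j))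
              * F s ⟨K-1, Nat.sub_lt hK Nat.one_pos⟩ := by
        simp only [mul_sub]
        rw [Finset.sum_sub_distrib, Finset.sum_mul]
      rw [h3]
      linear_combination (-1 : ℝ) * h1 + F s ⟨K-1, Nat.sub_lt hK Nat.one_pos⟩ * h2
    have hj := hind (fun j => c (Fin.castLE (Nat.sub_le K 1) j)) hz
    have hlastz : c ⟨K-1, Nat.sub_lt hK Nat.one_pos⟩ = 0 := by
      have h2 := sum_split hK c
      rw [hsum] at h2
      have h4 : ∑ j : Fin (K-1), c (Fin.castLE (Nat.sub_le K 1) j) = 0 :=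
        Finset.sum_eq_zero (fun j _ => hj j)
      linarith
    funext k
    rcases hcases k with ⟨j, rfl⟩ | rfl
    · exact hj j
    · exact hlastz
  · intro h hK'
    rw [Fintype.linearIndependent_iff]
    intro g hg j
    set c : Fin K → ℝ := fun k => if h2 : (k : ℕ) < K - 1 then g ⟨k, h2⟩ else -∑ j, g j with hc
    have hce : ∀ j : Fin (K-1), c (Fin.castLE (Nat.sub_le K 1) j) = g j := by
      intro j
      simp only [hc, Fin.coe_castLE]
      rw [dif_pos j.isLt]
    have hcl : c ⟨K-1, Nat.sub_lt hK' Nat.one_pos⟩ = -∑ j, g j := by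
      simp only [hc]
      rw [dif_neg (by omega)]
    have hsum : ∑ k, c k = 0 := by
      rw [sum_split hK' c, hcl, Finset.sum_congr rfl (fun j _ => hce j)]
      ring
    have hF : ∀ s, ∑ k, c k * F s k = 0 := by
      intro s
      have hgs := congrFun hg s
      simp only [Finset.sum_apply, Pi.smul_apply, Pi.zero_apply, smul_eq_mul] at hgs
      rw [sum_split hK' (fun k => c k * F s k)]
      simp only [hcl]
      rw [Finset.sum_congr rfl (fun (j : Fin (K-1)) _ => by rw [hce j] :
        ∀ j ∈ Finset.univ, c (Fin.castLE (Nat.sub_le K 1) j)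
          * F s (Fin.castLE (Nat.sub_le K 1) j) = g j * F s (Fin.castLE (Nat.sub_le K 1) j))]
      have h5 : ∑ j : Fin (K-1), g j * F s (Fin.castLE (Nat.sub_le K 1) j)
          = (∑ j : Fin (K-1), g j * (F s (Fin.castLE (Nat.sub_le K 1) j)
              - F s ⟨K-1, Nat.sub_lt hK' Nat.one_pos⟩))
            + (∑ j : Fin (K-1), g j) * F s ⟨K-1, Nat.sub_lt hK' Nat.one_pos⟩ := by
        simp only [mul_sub]
        rw [Finset.sum_sub_distrib, Finset.sum_mul]
        ring
      rw [h5, hgs]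
      ring
    have h6 := congrFun (h c hsum hF) (Fin.castLE (Nat.sub_le K 1) j)
    rw [hce j] at h6
    simpa using h6

lemma mem_coCols_iff {M K : ℕ} (F : Matrix (Fin M) (Fin K) ℝ) (x : Fin M → ℝ) :
    x ∈ coCols F ↔ ∃ w : Fin K → ℝ, (∀ k, 0 ≤ w k) ∧ ∑ k, w k = 1 ∧
      x = ∑ k, w k • (fun s => F s k : Fin M → ℝ) := by
  set S : Set (Fin M → ℝ) := {x | ∃ w : Fin K → ℝ, (∀ k, 0 ≤ w k) ∧ ∑ k, w k = 1 ∧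
      x = ∑ k, w k • (fun s => F s k : Fin M → ℝ)} with hS
  constructor
  · intro hx
    have hconv : Convex ℝ S := by
      intro x hx y hy a b ha hb hab
      obtain ⟨wx, hwx0, hwx1, rfl⟩ := hx
      obtain ⟨wy, hwy0, hwy1, rfl⟩ := hy
      refine ⟨fun k => a * wx k + b * wy k, fun k => by have := hwx0 k; have := hwy0 k; positivity, ?_, ?_⟩
      · rw [Finset.sum_add_distrib, ← Finset.mul_sum, ← Finset.mul_sum, hwx1, hwy1]; linarith
      · simp only [add_smul, mul_smul, Finset.sum_add_distrib, Finset.smul_sum]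
    have hbase : {v | ∃ k, v = fun s => F s k} ⊆ S := by
      rintro v ⟨k, rfl⟩
      refine ⟨fun l => if l = k then 1 else 0, fun l => by positivity, by simp, by simp⟩
    exact convexHull_min hbase hconv hx
  · rintro ⟨w, hw0, hw1, rfl⟩
    exact Convex.sum_mem (convex_convexHull ℝ _) (fun k _ => hw0 k) hw1
      (fun k _ => subset_convexHull ℝ _ ⟨k, rfl⟩)

lemma uniq_weights {M K : ℕ} {F : Matrix (Fin M) (Fin K) ℝ} (h : colDiffIndep F)
    {w w' : Fin K → ℝ} (hsum : ∑ k, w k = ∑ k, w' k)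
    (hF : (∑ k, w k • (fun s => F s k : Fin M → ℝ))
        = ∑ k, w' k • (fun s => F s k : Fin M → ℝ)) : w = w' := by
  rcases Nat.eq_zero_or_pos K with hK | hK
  · subst hK; funext k; exact k.elim0
  · have hc := (colDiffIndep_iff_zero F hK).mp h (fun k => w k - w' k)
      (by rw [Finset.sum_sub_distrib, hsum, sub_self])
      (by
        intro s
        have := congrFun hF s
        simp only [Finset.sum_apply, Pi.smul_apply, smul_eq_mul] at this
        simp only [sub_mul, Finset.sum_sub_distrib, this, sub_self])
    funext k
    have := congrFun hc k
    simpa [sub_eq_zero] using this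

lemma cols_distinct {M K : ℕ} {F : Matrix (Fin M) (Fin K) ℝ} (h : colDiffIndep F)
    {k l : Fin K} (hkl : (fun s => F s k : Fin M → ℝ) = fun s => F s l) : k = l := by
  have := uniq_weights h (w := fun m => if m = k then (1:ℝ) else 0)
    (w' := fun m => if m = l then (1:ℝ) else 0) (by simp) (by simp [ite_smul, hkl])
  have h2 := congrFun this k
  simp at h2
  by_contra hne
  exact hne h2

lemma col_match {M K₁ K₂ : ℕ} {F1 : Matrix (Fin M) (Fin K₁) ℝ}
    {F2 : Matrix (Fin M) (Fin K₂) ℝ} (h2 : colDiffIndep F2)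
    (hco : coCols F1 = coCols F2) (k : Fin K₂) :
    ∃ l : Fin K₁, ∀ s, F2 s k = F1 s l := by
  have hk2 : (fun s => F2 s k : Fin M → ℝ) ∈ coCols F1 := by
    rw [hco]
    exact subset_convexHull ℝ _ ⟨k, rfl⟩
  rw [mem_coCols_iff] at hk2
  obtain ⟨w, hw0, hw1, hwrep⟩ := hk2
  have hv : ∀ l : Fin K₁, ∃ v : Fin K₂ → ℝ, (∀ m, 0 ≤ v m) ∧ ∑ m, v m = 1 ∧
      (fun s => F1 s l : Fin M → ℝ) = ∑ m, v m • (fun s => F2 s m : Fin M → ℝ) := by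
    intro l
    rw [← mem_coCols_iff, ← hco]
    exact subset_convexHull ℝ _ ⟨l, rfl⟩
  choose v hv0 hv1 hvrep using hv
  have e1 : (fun s => F2 s k : Fin M → ℝ)
      = ∑ m, (∑ l, w l * v l m) • (fun s => F2 s m : Fin M → ℝ) := by
    rw [hwrep]
    simp only [Finset.sum_smul]
    rw [Finset.sum_comm]
    apply Finset.sum_congr rfl
    intro l _
    rw [hvrep l, Finset.smul_sum]
    simp only [mul_smul]
  have e2 : (fun s => F2 s k : Fin M → ℝ)
      = ∑ m, (if m = k then (1:ℝ) else 0) • (fun s => F2 s m : Fin M → ℝ) := by simp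
  have hWsum : ∑ m, ∑ l, w l * v l m = ∑ m, (if m = k then (1:ℝ) else 0) := by
    rw [Finset.sum_comm]
    simp only [← Finset.mul_sum]
    rw [Finset.sum_congr rfl (fun l _ => by rw [hv1 l])]
    simp [hw1]
  have hW := uniq_weights h2 hWsum (e1.symm.trans e2)
  -- find l0 with w l0 > 0
  have hl0 : ∃ l0, 0 < w l0 := by
    by_contra hcon
    push_neg at hcon
    have : ∑ l, w l = 0 := Finset.sum_eq_zero (fun l _ => le_antisymm (hcon l) (hw0 l))
    rw [hw1] at this
    exact one_ne_zero this
  obtain ⟨l0, hl0⟩ := hl0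
  refine ⟨l0, ?_⟩
  -- v l0 m = 0 for m ≠ k
  have hvz : ∀ m, m ≠ k → v l0 m = 0 := by
    intro m hm
    have hWm := congrFun hW m
    simp only [if_neg hm] at hWm
    have := (Finset.sum_eq_zero_iff_of_nonneg
      (fun l _ => mul_nonneg (hw0 l) (hv0 l m))).mp hWm l0 (Finset.mem_univ l0)
    rcases mul_eq_zero.mp this with h | h
    · exact absurd h (ne_of_gt hl0)
    · exact h
  have hvk : v l0 k = 1 := by
    have := hv1 l0
    rw [Finset.sum_eq_single k (fun m _ hm => hvz m hm) (fun hm => absurd (Finset.mem_univ k) hm)] at this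
    exact this
  intro s
  have := congrFun (hvrep l0) s
  simp only [Finset.sum_apply, Pi.smul_apply, smul_eq_mul] at this
  rw [Finset.sum_eq_single k (fun m _ hm => by rw [hvz m hm, zero_mul])
    (fun hm => absurd (Finset.mem_univ k) hm), hvk, one_mul] at this
  exact this.symm

lemma mequiv_of {M N K₁ K₂ : ℕ} {F1 : Matrix (Fin M) (Fin K₁) ℝ}
    {Q1 : Matrix (Fin K₁) (Fin N) ℝ} {F2 : Matrix (Fin M) (Fin K₂) ℝ}
    {Q2 : Matrix (Fin K₂) (Fin N) ℝ} (hco : coCols F1 = coCols F2)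
    (hi1 : colDiffIndep F1) (hi2 : colDiffIndep F2)
    (hQ1 : memQ Q1) (hQ2 : memQ Q2) (hprod : F1 * Q1 = F2 * Q2) :
    MEquiv F1 Q1 F2 Q2 := by
  choose π hπ using fun k => col_match hi2 hco k
  choose σ hσ using fun l => col_match hi1 hco.symm l
  have hinj : Function.Injective π := by
    intro k k' hkk
    apply cols_distinct hi2
    funext s
    rw [hπ k s, hπ k' s, hkk]
  have hsurj : Function.Surjective π := by
    intro l
    refine ⟨σ l, ?_⟩
    apply cols_distinct hi1
    funext s
    rw [← hπ (σ l) s, ← hσ l s]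
  have hbij : Function.Bijective π := ⟨hinj, hsurj⟩
  set e : Fin K₂ ≃ Fin K₁ := Equiv.ofBijective π hbij with he
  have hQ : ∀ k i, Q2 k i = Q1 (π k) i := by
    intro k i
    set w : Fin K₁ → ℝ := fun l => Q2 (e.symm l) i with hw
    have hwsum : ∑ l, w l = ∑ l, Q1 l i := by
      rw [hQ1.2 i, ← hQ2.2 (i := i)]
      exact Equiv.sum_comp e.symm (fun m => Q2 m i)
    have hwf : (∑ l, w l • (fun s => F1 s l : Fin M → ℝ))
        = ∑ l, Q1 l i • (fun s => F1 s l : Fin M → ℝ) := by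
      funext s
      simp only [Finset.sum_apply, Pi.smul_apply, smul_eq_mul]
      have lhs_eq : ∑ l, w l * F1 s l = ∑ m, Q2 m i * F2 s m := by
        rw [← Equiv.sum_comp e (fun l => w l * F1 s l)]
        apply Finset.sum_congr rfl
        intro m _
        have h1 : w (e m) = Q2 m i := by rw [hw]; simp [he]
        rw [h1]
        congr 1
        rw [hπ m s]
        rfl
      rw [lhs_eq]
      have h2 := congrFun (congrFun hprod s) i
      simp only [Matrix.mul_apply] at h2
      calc ∑ m, Q2 m i * F2 s m = ∑ m, F2 s m * Q2 m i :=
            Finset.sum_congr rfl fun m _ => mul_comm _ _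
        _ = ∑ l, F1 s l * Q1 l i := h2.symm
        _ = ∑ l, Q1 l i * F1 s l := Finset.sum_congr rfl fun l _ => mul_comm _ _
    have := congrFun (uniq_weights hi1 hwsum hwf) (π k)
    rw [← this, hw]
    simp [he]
  exact ⟨π, hbij, fun k s => hπ k s, hQ⟩

lemma coCols_eq_of_mequiv {M N K₁ K₂ : ℕ} {F1 : Matrix (Fin M) (Fin K₁) ℝ}
    {Q1 : Matrix (Fin K₁) (Fin N) ℝ} {F2 : Matrix (Fin M) (Fin K₂) ℝ}
    {Q2 : Matrix (Fin K₂) (Fin N) ℝ} (h : MEquiv F1 Q1 F2 Q2) :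
    coCols F1 = coCols F2 := by
  obtain ⟨π, ⟨hinj, hsurj⟩, hF, hQ⟩ := h
  unfold coCols
  congr 1
  ext v
  constructor
  · rintro ⟨l, rfl⟩
    obtain ⟨k, rfl⟩ := hsurj l
    exact ⟨k, funext fun s => (hF k s).symm⟩
  · rintro ⟨k, rfl⟩
    exact ⟨π k, funext fun s => hF k s⟩

lemma forward_b {M N K : ℕ} (hK : 0 < K) (hKN : K < N)
    {F : Matrix (Fin M) (Fin K) ℝ}
    (hid : ∀ Q' Q'' : Matrix (Fin K) (Fin N) ℝ, memQan Q' → memQan Q'' →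
      F * Q' = F * Q'' → MEquiv F Q' F Q'') :
    colDiffIndep F := by
  rw [colDiffIndep_iff_zero F hK]
  intro c hsum hFc
  set u : ℝ := (K : ℝ)⁻¹ with hu
  set S : ℝ := ∑ k, |c k| with hSdef
  have hKpos : (0:ℝ) < (K:ℝ) := by exact_mod_cast hK
  have hupos : 0 < u := by positivity
  have hS0 : 0 ≤ S := Finset.sum_nonneg fun k _ => abs_nonneg _
  set ε : ℝ := u / (S + 1) with hε
  have hεpos : 0 < ε := by positivity
  have hcS : ∀ k, |c k| ≤ S := fun k =>
    Finset.single_le_sum (fun l (_ : l ∈ Finset.univ) => abs_nonneg (c l)) (Finset.mem_univ k)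
  have hnn : ∀ k, 0 ≤ u + ε * c k := by
    intro k
    have h1 : -S ≤ c k := by have := (abs_le.mp (le_refl |c k|)); linarith [neg_abs_le (c k), hcS k]
    have h2 : ε * (S + 1) = u := by rw [hε]; exact div_mul_cancel₀ u (by linarith : S + 1 ≠ 0)
    nlinarith [hεpos.le]
  set Q' : Matrix (Fin K) (Fin N) ℝ :=
    fun k i => if h : (i : ℕ) < K then (if k = ⟨i, h⟩ then (1:ℝ) else 0) else u with hQ'
  set Q'' : Matrix (Fin K) (Fin N) ℝ :=
    fun k i => if h : (i : ℕ) < K then (if k = ⟨i, h⟩ then (1:ℝ) else 0) else u + ε * c k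
      with hQ''
  have hanch : ∀ k : Fin K, (k : ℕ) < N := fun k => lt_trans k.isLt hKN
  have hQ'an : memQan Q' := by
    refine ⟨⟨?_, ?_⟩, ?_⟩
    · intro k i
      simp only [hQ']
      split
      · split <;> norm_num
      · exact hupos.le
    · intro i
      simp only [hQ']
      by_cases h : (i : ℕ) < K
      · simp [h]
      · simp only [dif_neg h]
        rw [Finset.sum_const, Finset.card_univ, Fintype.card_fin, nsmul_eq_mul, hu,
          mul_inv_cancel₀ (by exact_mod_cast hK.ne')]
    · intro k
      refine ⟨⟨k, hanch k⟩, fun l => ?_⟩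
      simp only [hQ']
      rw [dif_pos k.isLt]
  have hQ''an : memQan Q'' := by
    refine ⟨⟨?_, ?_⟩, ?_⟩
    · intro k i
      simp only [hQ'']
      split
      · split <;> norm_num
      · exact hnn k
    · intro i
      simp only [hQ'']
      by_cases h : (i : ℕ) < K
      · simp [h]
      · simp only [dif_neg h]
        rw [Finset.sum_add_distrib, Finset.sum_const, Finset.card_univ, Fintype.card_fin,
          nsmul_eq_mul, hu, mul_inv_cancel₀ (by exact_mod_cast hK.ne'), ← Finset.mul_sum, hsum]
        ring
    · intro k
      refine ⟨⟨k, hanch k⟩, fun l => ?_⟩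
      simp only [hQ'']
      rw [dif_pos k.isLt]
  have hprod : F * Q' = F * Q'' := by
    ext s i
    rw [Matrix.mul_apply, Matrix.mul_apply]
    simp only [hQ', hQ'']
    by_cases h : (i : ℕ) < K
    · simp [h]
    · simp only [dif_neg h, mul_add]
      rw [Finset.sum_add_distrib]
      have : ∑ k, F s k * (ε * c k) = ε * ∑ k, c k * F s k := by
        rw [Finset.mul_sum]
        exact Finset.sum_congr rfl fun k _ => by ring
      rw [this, hFc s, mul_zero, add_zero]
  obtain ⟨π, hbij, hFm, hQm⟩ := hid Q' Q'' hQ'an hQ''an hprod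
  have hπ : ∀ k, π k = k := by
    intro k
    have ht := hQm k ⟨k, hanch k⟩
    simp only [hQ', hQ''] at ht
    rw [dif_pos k.isLt, dif_pos k.isLt] at ht
    have hk : (⟨(k:ℕ), k.isLt⟩ : Fin K) = k := Fin.ext rfl
    rw [hk] at ht
    by_contra hne
    rw [if_neg hne] at ht
    simp at ht
  funext k
  have ht2 := hQm k ⟨K, hKN⟩
  simp only [hQ', hQ''] at ht2
  rw [dif_neg (by simp), dif_neg (by simp)] at ht2
  have h0 : ε * c k = 0 := by linarith
  have hck := (mul_eq_zero.mp h0).resolve_left hεpos.ne'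
  simpa using hck


/-- characterisation of identifiability for models closed under
replacing `Q` by any element of `𝓠_{K(F)}^an`, with `K(F) < N`. -/
theorem stmt7 {M N : ℕ} (hM : 1 ≤ M) (hN : 1 ≤ N)
    (𝓜 : ∀ K : ℕ, Set (Matrix (Fin M) (Fin K) ℝ × Matrix (Fin K) (Fin N) ℝ))
    (hmem : ∀ (K : ℕ) (F : Matrix (Fin M) (Fin K) ℝ) (Q : Matrix (Fin K) (Fin N) ℝ),
      (F, Q) ∈ 𝓜 K → 1 ≤ K ∧ memF F ∧ memQ Q)
    (h1 : ∀ (K : ℕ) (F : Matrix (Fin M) (Fin K) ℝ) (Q : Matrix (Fin K) (Fin N) ℝ),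
      (F, Q) ∈ 𝓜 K → K < N)
    (h2 : ∀ (K : ℕ) (F : Matrix (Fin M) (Fin K) ℝ) (Q : Matrix (Fin K) (Fin N) ℝ),
      (F, Q) ∈ 𝓜 K → ∀ Q' : Matrix (Fin K) (Fin N) ℝ, memQan Q' → (F, Q') ∈ 𝓜 K) :
    Identifiable 𝓜 ↔
      ((∀ (K₁ K₂ : ℕ) (F1 : Matrix (Fin M) (Fin K₁) ℝ) (Q1 : Matrix (Fin K₁) (Fin N) ℝ)
          (F2 : Matrix (Fin M) (Fin K₂) ℝ) (Q2 : Matrix (Fin K₂) (Fin N) ℝ),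
          (F1, Q1) ∈ 𝓜 K₁ → (F2, Q2) ∈ 𝓜 K₂ → F1 * Q1 = F2 * Q2 →
          coCols F1 = coCols F2) ∧
        (∀ (K : ℕ) (F : Matrix (Fin M) (Fin K) ℝ) (Q : Matrix (Fin K) (Fin N) ℝ),
          (F, Q) ∈ 𝓜 K → colDiffIndep F)) := by
  constructor
  · intro hid
    constructor
    · intro K₁ K₂ F1 Q1 F2 Q2 m1 m2 hp
      exact coCols_eq_of_mequiv (hid K₁ K₂ F1 Q1 F2 Q2 m1 m2 hp)
    · intro K F Q hFQ
      obtain ⟨hK1, hFmem, hQmem⟩ := hmem K F Q hFQ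
      exact forward_b hK1 (h1 K F Q hFQ)
        (fun Q' Q'' hQ' hQ'' hp =>
          hid K K F Q' F Q'' (h2 K F Q hFQ Q' hQ') (h2 K F Q hFQ Q'' hQ'') hp)
  · rintro ⟨ha, hb⟩ K₁ K₂ F1 Q1 F2 Q2 m1 m2 hp
    exact mequiv_of (ha K₁ K₂ F1 Q1 F2 Q2 m1 m2 hp) (hb K₁ F1 Q1 m1) (hb K₂ F2 Q2 m2)
      (hmem K₁ F1 Q1 m1).2.2 (hmem K₂ F2 Q2 m2).2.2 hp
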